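/- For n ≥ 2 and every index i ∈ {1,…,n}, the n−1 Friedman–Smith vectors {v₁,…,vₙ} \ {vᵢ}, where v₁ = 2e₁ − e₂ − ⋯ − eₙ and vⱼ = eⱼ for j = 2,…,n, can be extended to a ℤ-basis of ℤⁿ; that is, any n−1 rows of the Friedman–Smith matrix span a primitive rank-(n−1) sublattice of ℤⁿ. (Hence every proper face of the Friedman–Smith monodromy cone is matroidal.) -/

import Mathlib

/-- The Friedman–Smith vectors for `FS_n`: `v₁ = 2e₁ − e₂ − ⋯ − eₙ` and `vᵢ = eᵢ` for
`i = 2, …, n` (written with `0`-based indices). -/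
def fsVec (n : ℕ) : Fin n → Fin n → ℤ := fun i =>
  if i.val = 0 then (fun k => if k.val = 0 then 2 else -1) else Pi.single i 1

/-- Coordinate map for the modified Friedman–Smith basis (inverse of `fsG`). -/
def fsF (n : ℕ) (z i : Fin n) : (Fin n → ℤ) →ₗ[ℤ] (Fin n → ℤ) where
  toFun y := fun k => if k = z then -y i else if k = i then y z + 2 * y i else y k - y i
  map_add' a b := by
    funext k; by_cases h1 : k = z <;> by_cases h2 : k = i <;> simp [h1, h2] <;> first | (split_ifs <;> ring) | ring
  map_smul' c a := by
    funext k; by_cases h1 : k = z <;> by_cases h2 : k = i <;> simp [h1, h2] <;> first | (split_ifs <;> ring) | ring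

/-- The modified Friedman–Smith basis as a linear map (`x ↦ Σ xⱼ bⱼ`). -/
def fsG (n : ℕ) (z i : Fin n) : (Fin n → ℤ) →ₗ[ℤ] (Fin n → ℤ) where
  toFun x := fun k => if k = z then 2 * x z + x i else if k = i then -x z else x k - x z
  map_add' a b := by
    funext k; by_cases h1 : k = z <;> by_cases h2 : k = i <;> simp [h1, h2] <;> first | (split_ifs <;> ring) | ring
  map_smul' c a := by
    funext k; by_cases h1 : k = z <;> by_cases h2 : k = i <;> simp [h1, h2] <;> first | (split_ifs <;> ring) | ring

theorem fsFG (n : ℕ) (z i : Fin n) (h : i ≠ z) :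
    (fsF n z i).comp (fsG n z i) = LinearMap.id := by
  apply LinearMap.ext; intro x
  funext k
  simp only [LinearMap.comp_apply, LinearMap.id_apply, fsF, fsG, LinearMap.coe_mk,
    AddHom.coe_mk]
  by_cases h1 : k = z <;> by_cases h2 : k = i <;>
    simp [h1, h2, h, Ne.symm h]

theorem fsGF (n : ℕ) (z i : Fin n) (h : i ≠ z) :
    (fsG n z i).comp (fsF n z i) = LinearMap.id := by
  apply LinearMap.ext; intro y
  funext k
  simp only [LinearMap.comp_apply, LinearMap.id_apply, fsF, fsG, LinearMap.coe_mk,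
    AddHom.coe_mk]
  by_cases h1 : k = z <;> by_cases h2 : k = i <;>
    simp [h1, h2, h, Ne.symm h]

/-- For `n ≥ 2` and every index `i`, the `n − 1` Friedman–Smith vectors `{v₁, …, vₙ} \ {vᵢ}`
can be extended to a `ℤ`-basis of `ℤⁿ`; that is, any `n − 1` rows of the Friedman–Smith
matrix span a primitive rank-`(n−1)` sublattice of `ℤⁿ`.  (Hence every proper face of the
Friedman–Smith monodromy cone is matroidal.) -/
theorem fsVec_proper_subfamilies_extend_to_basis (n : ℕ) (hn : 2 ≤ n) (i : Fin n) :
    ∃ (B : Module.Basis (Fin n) ℤ (Fin n → ℤ)) (f : Fin n ↪ Fin n),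
      ∀ j : Fin n, j ≠ i → B (f j) = fsVec n j := by
  have hn0 : 0 < n := by omega
  set z : Fin n := ⟨0, hn0⟩ with hz
  by_cases hi : i = z
  · refine ⟨Pi.basisFun ℤ (Fin n), Function.Embedding.refl _, ?_⟩
    intro j hj
    have hj0 : j.val ≠ 0 := by
      intro h
      exact hj (by rw [hi]; exact Fin.ext h)
    simp [fsVec, hj0]
  · refine ⟨Module.Basis.ofEquivFun
      (LinearEquiv.ofLinear (fsF n z i) (fsG n z i) (fsFG n z i hi) (fsGF n z i hi)),
      Function.Embedding.refl _, ?_⟩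
    intro j hj
    simp only [Module.Basis.coe_ofEquivFun, LinearEquiv.ofLinear_symm_apply,
      Function.Embedding.refl_apply]
    funext k
    simp only [fsG, LinearMap.coe_mk, AddHom.coe_mk, fsVec]
    by_cases hjz : j = z
    · have hjv : j.val = 0 := by rw [hjz]
      by_cases h1 : k = z <;> by_cases h2 : k = i <;>
        simp_all [Pi.single_apply, Fin.ext_iff]
    · have hjv : j.val ≠ 0 := by
        intro h; exact hjz (Fin.ext h)
      by_cases h1 : k = z <;> by_cases h2 : k = i <;>
        simp_all [Pi.single_apply, Fin.ext_iff]
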